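/- Let P ∈ k[u₀, u₁, v₀, v₁] be a nonzero polynomial that is bihomogeneous of bidegree (2,2), i.e., homogeneous of degree 2 in the variables (u₀, u₁) and homogeneous of degree 2 in the variables (v₀, v₁). Suppose there is no pair (u, v) with u ∈ k² ∖ {0} and v ∈ k² ∖ {0} at which all four partial derivatives ∂P/∂u₀, ∂P/∂u₁, ∂P/∂v₀, ∂P/∂v₁ vanish simultaneously (i.e., the curve {P = 0} ⊆ ℙ¹ × ℙ¹ is smooth). Then P is irreducible in k[u₀, u₁, v₀, v₁], i.e., P is not a product of two nonconstant polynomials. -/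

import Mathlib

open MvPolynomial

set_option linter.unusedSectionVars false

namespace SmoothAux

noncomputable section

variable {σ : Type*} {k : Type*} [CommRing k] [IsDomain k]

/-- The homogenization map sending `X i ↦ X^(w i) * C (X i)`. -/
def psi (w : σ → ℕ) : MvPolynomial σ k →+* Polynomial (MvPolynomial σ k) :=
  eval₂Hom (Polynomial.C.comp MvPolynomial.C)
    (fun i => Polynomial.X ^ w i * Polynomial.C (MvPolynomial.X i))

lemma psi_monomial (w : σ → ℕ) (d : σ →₀ ℕ) (c : k) :
    psi w (monomial d c) = Polynomial.monomial (Finsupp.weight w d) (monomial d c) := by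
  have h1 : ∀ i ∈ d.support,
      (Polynomial.X ^ w i * Polynomial.C (MvPolynomial.X i : MvPolynomial σ k)) ^ d i
        = Polynomial.X ^ (w i * d i) * Polynomial.C (MvPolynomial.X i ^ d i) := by
    intro i _
    rw [mul_pow, ← pow_mul, ← map_pow]
  have h2 : Finsupp.weight w d = ∑ i ∈ d.support, w i * d i := by
    rw [Finsupp.weight_apply, Finsupp.sum]
    exact Finset.sum_congr rfl fun i _ => by simp [mul_comm]
  rw [psi, eval₂Hom_monomial, Finsupp.prod, Finset.prod_congr rfl h1,
    Finset.prod_mul_distrib, Finset.prod_pow_eq_pow_sum, ← map_prod, h2]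
  rw [MvPolynomial.monomial_eq, Finsupp.prod, ← Polynomial.C_mul_X_pow_eq_monomial,
    RingHom.comp_apply, map_mul]
  ring

lemma coeff_psi (w : σ → ℕ) (Q : MvPolynomial σ k) (j : ℕ) :
    (psi w Q).coeff j = weightedHomogeneousComponent w j Q := by
  induction Q using MvPolynomial.induction_on' with
  | add p q hp hq => rw [map_add, Polynomial.coeff_add, hp, hq, map_add]
  | monomial d c =>
    rw [psi_monomial, Polynomial.coeff_monomial]
    by_cases h : Finsupp.weight w d = j
    · rw [if_pos h,
        IsWeightedHomogeneous.weightedHomogeneousComponent_same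
          (isWeightedHomogeneous_monomial w d c h)]
    · rw [if_neg h,
        IsWeightedHomogeneous.weightedHomogeneousComponent_ne _
          (isWeightedHomogeneous_monomial w d c rfl) (Ne.symm h)]

lemma psi_eval_one (w : σ → ℕ) (Q : MvPolynomial σ k) :
    Polynomial.eval 1 (psi w Q) = Q := by
  induction Q using MvPolynomial.induction_on' with
  | add p q hp hq => rw [map_add, Polynomial.eval_add, hp, hq]
  | monomial d c => rw [psi_monomial, Polynomial.eval_monomial, one_pow, mul_one]

lemma psi_ne_zero {w : σ → ℕ} {Q : MvPolynomial σ k} (hQ : Q ≠ 0) : psi w Q ≠ 0 := by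
  intro h
  exact hQ (by rw [← psi_eval_one w Q, h, Polynomial.eval_zero])

lemma psi_of_homog {w : σ → ℕ} {Q : MvPolynomial σ k} {n : ℕ}
    (h : Q.IsWeightedHomogeneous w n) : psi w Q = Polynomial.monomial n Q := by
  ext j
  rw [coeff_psi, Polynomial.coeff_monomial]
  by_cases hj : j = n
  · subst hj
    rw [if_pos rfl, h.weightedHomogeneousComponent_same]
  · rw [if_neg (Ne.symm hj), h.weightedHomogeneousComponent_ne j hj]

/-- Factors of a weighted homogeneous polynomial over a domain are weighted homogeneous. -/
lemma factor_isWeightedHomogeneous {P₁ P₂ : MvPolynomial σ k} {w : σ → ℕ} {n : ℕ}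
    (hne1 : P₁ ≠ 0) (hne2 : P₂ ≠ 0) (h : IsWeightedHomogeneous w (P₁ * P₂) n) :
    ∃ a b : ℕ, a + b = n ∧ IsWeightedHomogeneous w P₁ a ∧ IsWeightedHomogeneous w P₂ b := by
  classical
  have hP : P₁ * P₂ ≠ 0 := mul_ne_zero hne1 hne2
  have hψ : psi w P₁ * psi w P₂ = Polynomial.monomial n (P₁ * P₂) := by
    rw [← map_mul, psi_of_homog h]
  have hψ1 : psi w P₁ ≠ 0 := psi_ne_zero hne1
  have hψ2 : psi w P₂ ≠ 0 := psi_ne_zero hne2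
  have hdeg : (psi w P₁).natDegree + (psi w P₂).natDegree = n := by
    rw [← Polynomial.natDegree_mul hψ1 hψ2, hψ, Polynomial.natDegree_monomial, if_neg hP]
  have htr : (psi w P₁).natTrailingDegree + (psi w P₂).natTrailingDegree = n := by
    rw [← Polynomial.natTrailingDegree_mul hψ1 hψ2, hψ,
      Polynomial.natTrailingDegree_monomial hP]
  have h1 := Polynomial.natTrailingDegree_le_natDegree (psi w P₁)
  have h2 := Polynomial.natTrailingDegree_le_natDegree (psi w P₂)
  have e1 : (psi w P₁).natTrailingDegree = (psi w P₁).natDegree := by omega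
  have e2 : (psi w P₂).natTrailingDegree = (psi w P₂).natDegree := by omega
  have key : ∀ Q : MvPolynomial σ k, Q ≠ 0 →
      (psi w Q).natTrailingDegree = (psi w Q).natDegree →
      IsWeightedHomogeneous w Q (psi w Q).natDegree := by
    intro Q hQ he
    set a := (psi w Q).natDegree with ha
    have hco : ∀ j, j ≠ (psi w Q).natDegree → weightedHomogeneousComponent w j Q = 0 := by
      intro j hj
      rw [← coeff_psi]
      rcases lt_or_gt_of_ne hj with hlt | hgt
      · exact Polynomial.coeff_eq_zero_of_lt_natTrailingDegree (by omega)
      · exact Polynomial.coeff_eq_zero_of_natDegree_lt hgt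
    have hQe : Q = weightedHomogeneousComponent w (psi w Q).natDegree Q := by
      have hsum := finsum_weightedHomogeneousComponent w Q
      conv_lhs => rw [← hsum]
      exact finsum_eq_single _ _ hco
    rw [hQe]
    exact weightedHomogeneousComponent_isWeightedHomogeneous a Q
  exact ⟨_, _, hdeg, key P₁ hne1 e1, key P₂ hne2 e2⟩

end

section Field

variable {k : Type*} [Field k]

lemma quadRoot [IsAlgClosed k] (A B C : k) :
    ∃ x y : k, ¬(x = 0 ∧ y = 0) ∧ A * x ^ 2 + B * (x * y) + C * y ^ 2 = 0 := by
  by_cases hA : A = 0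
  · exact ⟨1, 0, fun h => one_ne_zero h.1, by simp [hA]⟩
  · obtain ⟨t, ht⟩ := IsAlgClosed.exists_root
      (Polynomial.C A * Polynomial.X ^ 2 + Polynomial.C B * Polynomial.X + Polynomial.C C)
      (by rw [Polynomial.degree_quadratic hA]; exact (by decide : (2 : WithBot ℕ) ≠ 0))
    have hev : A * t ^ 2 + B * t + C = 0 := by
      simpa [Polynomial.IsRoot] using ht
    exact ⟨t, 1, fun h => one_ne_zero h.2, by linear_combination hev⟩

lemma linRoot (A C : k) : ∃ x y : k, ¬(x = 0 ∧ y = 0) ∧ A * x + C * y = 0 := by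
  by_cases hA : A = 0
  · exact ⟨1, 0, fun h => one_ne_zero h.1, by simp [hA]⟩
  · exact ⟨C, -A, fun h => hA (by simpa using h.2), by ring⟩

lemma linPair {a b a' b' : k} (h : a * b' - b * a' = 0) :
    ∃ x y : k, ¬(x = 0 ∧ y = 0) ∧ x * a + y * b = 0 ∧ x * a' + y * b' = 0 := by
  by_cases ha : a = 0 ∧ b = 0
  · obtain ⟨x, y, hxy, hl⟩ := linRoot a' b'
    exact ⟨x, y, hxy, by simp [ha.1, ha.2], by linear_combination hl⟩
  · refine ⟨-b, a, ?_, by ring, by linear_combination h⟩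
    intro hh
    exact ha ⟨hh.2, by simpa using hh.1⟩

lemma weight_u (d : Fin 4 →₀ ℕ) : Finsupp.weight ![1,1,0,0] d = d 0 + d 1 := by
  rw [Finsupp.weight_apply, Finsupp.sum_fintype _ _ (by intro i; simp), Fin.sum_univ_four]
  simp

lemma weight_v (d : Fin 4 →₀ ℕ) : Finsupp.weight ![0,0,1,1] d = d 2 + d 3 := by
  rw [Finsupp.weight_apply, Finsupp.sum_fintype _ _ (by intro i; simp), Fin.sum_univ_four]
  simp

lemma eval_expand (x y z w : k) (Q : MvPolynomial (Fin 4) k) :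
    eval ![x,y,z,w] Q = ∑ d ∈ Q.support, Q.coeff d * (x ^ d 0 * y ^ d 1 * z ^ d 2 * w ^ d 3) := by
  rw [eval_eq']
  refine Finset.sum_congr rfl fun d _ => ?_
  rw [Fin.prod_univ_four]
  rfl

lemma eval_udeg2 {Q : MvPolynomial (Fin 4) k}
    (hQ : Q.IsWeightedHomogeneous ![1,1,0,0] 2) (x y z w : k) :
    eval ![x,y,z,w] Q =
      eval ![1,0,z,w] Q * x ^ 2
      + (eval ![1,1,z,w] Q - eval ![1,0,z,w] Q - eval ![0,1,z,w] Q) * (x * y)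
      + eval ![0,1,z,w] Q * y ^ 2 := by
  rw [eval_expand, eval_expand, eval_expand, eval_expand, ← Finset.sum_sub_distrib,
    ← Finset.sum_sub_distrib, Finset.sum_mul, Finset.sum_mul, Finset.sum_mul,
    ← Finset.sum_add_distrib, ← Finset.sum_add_distrib]
  refine Finset.sum_congr rfl fun d hd => ?_
  have h01 : d 0 + d 1 = 2 := by
    have := hQ (mem_support_iff.mp hd); rw [weight_u] at this; exact this
  have h0 : d 0 = 0 ∧ d 1 = 2 ∨ d 0 = 1 ∧ d 1 = 1 ∨ d 0 = 2 ∧ d 1 = 0 := by omega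
  rcases h0 with ⟨e0, e1⟩ | ⟨e0, e1⟩ | ⟨e0, e1⟩ <;> rw [e0, e1] <;> norm_num <;> ring

lemma eval_udeg1 {Q : MvPolynomial (Fin 4) k}
    (hQ : Q.IsWeightedHomogeneous ![1,1,0,0] 1) (x y z w : k) :
    eval ![x,y,z,w] Q = eval ![1,0,z,w] Q * x + eval ![0,1,z,w] Q * y := by
  rw [eval_expand, eval_expand, eval_expand, Finset.sum_mul, Finset.sum_mul,
    ← Finset.sum_add_distrib]
  refine Finset.sum_congr rfl fun d hd => ?_
  have h01 : d 0 + d 1 = 1 := by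
    have := hQ (mem_support_iff.mp hd); rw [weight_u] at this; exact this
  have h0 : d 0 = 0 ∧ d 1 = 1 ∨ d 0 = 1 ∧ d 1 = 0 := by omega
  rcases h0 with ⟨e0, e1⟩ | ⟨e0, e1⟩ <;> rw [e0, e1] <;> norm_num <;> ring

lemma eval_udeg0 {Q : MvPolynomial (Fin 4) k}
    (hQ : Q.IsWeightedHomogeneous ![1,1,0,0] 0) (x y z w : k) :
    eval ![x,y,z,w] Q = eval ![1,1,z,w] Q := by
  rw [eval_expand, eval_expand]
  refine Finset.sum_congr rfl fun d hd => ?_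
  have h01 : d 0 + d 1 = 0 := by
    have := hQ (mem_support_iff.mp hd); rw [weight_u] at this; exact this
  have e0 : d 0 = 0 := by omega
  have e1 : d 1 = 0 := by omega
  rw [e0, e1]; norm_num

lemma eval_vdeg2 {Q : MvPolynomial (Fin 4) k}
    (hQ : Q.IsWeightedHomogeneous ![0,0,1,1] 2) (x y z w : k) :
    eval ![x,y,z,w] Q =
      eval ![x,y,1,0] Q * z ^ 2
      + (eval ![x,y,1,1] Q - eval ![x,y,1,0] Q - eval ![x,y,0,1] Q) * (z * w)
      + eval ![x,y,0,1] Q * w ^ 2 := by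
  rw [eval_expand, eval_expand, eval_expand, eval_expand, ← Finset.sum_sub_distrib,
    ← Finset.sum_sub_distrib, Finset.sum_mul, Finset.sum_mul, Finset.sum_mul,
    ← Finset.sum_add_distrib, ← Finset.sum_add_distrib]
  refine Finset.sum_congr rfl fun d hd => ?_
  have h23 : d 2 + d 3 = 2 := by
    have := hQ (mem_support_iff.mp hd); rw [weight_v] at this; exact this
  have h0 : d 2 = 0 ∧ d 3 = 2 ∨ d 2 = 1 ∧ d 3 = 1 ∨ d 2 = 2 ∧ d 3 = 0 := by omega
  rcases h0 with ⟨e0, e1⟩ | ⟨e0, e1⟩ | ⟨e0, e1⟩ <;> rw [e0, e1] <;> norm_num <;> ring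

lemma eval_vdeg1 {Q : MvPolynomial (Fin 4) k}
    (hQ : Q.IsWeightedHomogeneous ![0,0,1,1] 1) (x y z w : k) :
    eval ![x,y,z,w] Q = eval ![x,y,1,0] Q * z + eval ![x,y,0,1] Q * w := by
  rw [eval_expand, eval_expand, eval_expand, Finset.sum_mul, Finset.sum_mul,
    ← Finset.sum_add_distrib]
  refine Finset.sum_congr rfl fun d hd => ?_
  have h23 : d 2 + d 3 = 1 := by
    have := hQ (mem_support_iff.mp hd); rw [weight_v] at this; exact this
  have h0 : d 2 = 0 ∧ d 3 = 1 ∨ d 2 = 1 ∧ d 3 = 0 := by omega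
  rcases h0 with ⟨e0, e1⟩ | ⟨e0, e1⟩ <;> rw [e0, e1] <;> norm_num <;> ring

lemma eval_vdeg0 {Q : MvPolynomial (Fin 4) k}
    (hQ : Q.IsWeightedHomogeneous ![0,0,1,1] 0) (x y z w : k) :
    eval ![x,y,z,w] Q = eval ![x,y,1,1] Q := by
  rw [eval_expand, eval_expand]
  refine Finset.sum_congr rfl fun d hd => ?_
  have h23 : d 2 + d 3 = 0 := by
    have := hQ (mem_support_iff.mp hd); rw [weight_v] at this; exact this
  have e0 : d 2 = 0 := by omega
  have e1 : d 3 = 0 := by omega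
  rw [e0, e1]; norm_num

variable [IsAlgClosed k]

lemma caseA {Q₁ Q₂ : MvPolynomial (Fin 4) k} {a' : ℕ}
    (hb2 : Q₁.IsWeightedHomogeneous ![0,0,1,1] 2)
    (ha' : Q₂.IsWeightedHomogeneous ![1,1,0,0] a') (ha'12 : a' = 1 ∨ a' = 2)
    (hb0 : Q₂.IsWeightedHomogeneous ![0,0,1,1] 0) :
    ∃ x y z w : k, ¬(x = 0 ∧ y = 0) ∧ ¬(z = 0 ∧ w = 0) ∧
      eval ![x,y,z,w] Q₁ = 0 ∧ eval ![x,y,z,w] Q₂ = 0 := by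
  obtain ⟨x, y, hxy, hx⟩ : ∃ x y : k, ¬(x = 0 ∧ y = 0) ∧ eval ![x,y,1,1] Q₂ = 0 := by
    rcases ha'12 with h | h
    · subst h
      obtain ⟨x, y, hxy, he⟩ := linRoot (eval ![1,0,1,1] Q₂) (eval ![0,1,1,1] Q₂)
      exact ⟨x, y, hxy, by rw [eval_udeg1 ha']; linear_combination he⟩
    · subst h
      obtain ⟨x, y, hxy, he⟩ := quadRoot (eval ![1,0,1,1] Q₂)
        (eval ![1,1,1,1] Q₂ - eval ![1,0,1,1] Q₂ - eval ![0,1,1,1] Q₂) (eval ![0,1,1,1] Q₂)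
      exact ⟨x, y, hxy, by rw [eval_udeg2 ha']; linear_combination he⟩
  obtain ⟨z, w, hzw, hz⟩ := quadRoot (eval ![x,y,1,0] Q₁)
    (eval ![x,y,1,1] Q₁ - eval ![x,y,1,0] Q₁ - eval ![x,y,0,1] Q₁) (eval ![x,y,0,1] Q₁)
  refine ⟨x, y, z, w, hxy, hzw, ?_, ?_⟩
  · rw [eval_vdeg2 hb2]; linear_combination hz
  · rw [eval_vdeg0 hb0]; exact hx

lemma caseA' {Q₁ Q₂ : MvPolynomial (Fin 4) k} {b' : ℕ}
    (ha2 : Q₁.IsWeightedHomogeneous ![1,1,0,0] 2)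
    (hb' : Q₂.IsWeightedHomogeneous ![0,0,1,1] b') (hb'12 : b' = 1 ∨ b' = 2)
    (ha0 : Q₂.IsWeightedHomogeneous ![1,1,0,0] 0) :
    ∃ x y z w : k, ¬(x = 0 ∧ y = 0) ∧ ¬(z = 0 ∧ w = 0) ∧
      eval ![x,y,z,w] Q₁ = 0 ∧ eval ![x,y,z,w] Q₂ = 0 := by
  obtain ⟨z, w, hzw, hx⟩ : ∃ z w : k, ¬(z = 0 ∧ w = 0) ∧ eval ![1,1,z,w] Q₂ = 0 := by
    rcases hb'12 with h | h
    · subst h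
      obtain ⟨z, w, hzw, he⟩ := linRoot (eval ![1,1,1,0] Q₂) (eval ![1,1,0,1] Q₂)
      exact ⟨z, w, hzw, by rw [eval_vdeg1 hb']; linear_combination he⟩
    · subst h
      obtain ⟨z, w, hzw, he⟩ := quadRoot (eval ![1,1,1,0] Q₂)
        (eval ![1,1,1,1] Q₂ - eval ![1,1,1,0] Q₂ - eval ![1,1,0,1] Q₂) (eval ![1,1,0,1] Q₂)
      exact ⟨z, w, hzw, by rw [eval_vdeg2 hb']; linear_combination he⟩
  obtain ⟨x, y, hxy, hz⟩ := quadRoot (eval ![1,0,z,w] Q₁)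
    (eval ![1,1,z,w] Q₁ - eval ![1,0,z,w] Q₁ - eval ![0,1,z,w] Q₁) (eval ![0,1,z,w] Q₁)
  refine ⟨x, y, z, w, hxy, hzw, ?_, ?_⟩
  · rw [eval_udeg2 ha2]; linear_combination hz
  · rw [eval_udeg0 ha0]; exact hx

lemma caseB {Q₁ Q₂ : MvPolynomial (Fin 4) k}
    (ha1 : Q₁.IsWeightedHomogeneous ![1,1,0,0] 1) (hb1 : Q₁.IsWeightedHomogeneous ![0,0,1,1] 1)
    (ha1' : Q₂.IsWeightedHomogeneous ![1,1,0,0] 1) (hb1' : Q₂.IsWeightedHomogeneous ![0,0,1,1] 1) :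
    ∃ x y z w : k, ¬(x = 0 ∧ y = 0) ∧ ¬(z = 0 ∧ w = 0) ∧
      eval ![x,y,z,w] Q₁ = 0 ∧ eval ![x,y,z,w] Q₂ = 0 := by
  set α := eval ![(1:k),0,1,0] Q₁ with hα
  set β := eval ![(1:k),0,0,1] Q₁ with hβ
  set γ := eval ![(0:k),1,1,0] Q₁ with hγ
  set δ := eval ![(0:k),1,0,1] Q₁ with hδ
  set α' := eval ![(1:k),0,1,0] Q₂ with hα'
  set β' := eval ![(1:k),0,0,1] Q₂ with hβ'
  set γ' := eval ![(0:k),1,1,0] Q₂ with hγ'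
  set δ' := eval ![(0:k),1,0,1] Q₂ with hδ'
  obtain ⟨z, w, hzw, hD⟩ := quadRoot (α*γ' - γ*α') (α*δ' + β*γ' - γ*β' - δ*α') (β*δ' - δ*β')
  have hL : eval ![1,0,z,w] Q₁ = α*z + β*w := by rw [eval_vdeg1 hb1]
  have hM : eval ![0,1,z,w] Q₁ = γ*z + δ*w := by rw [eval_vdeg1 hb1]
  have hL' : eval ![1,0,z,w] Q₂ = α'*z + β'*w := by rw [eval_vdeg1 hb1']
  have hM' : eval ![0,1,z,w] Q₂ = γ'*z + δ'*w := by rw [eval_vdeg1 hb1']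
  have hdet : (α*z + β*w) * (γ'*z + δ'*w) - (γ*z + δ*w) * (α'*z + β'*w) = 0 := by
    linear_combination hD
  obtain ⟨x, y, hxy, he1, he2⟩ := linPair hdet
  refine ⟨x, y, z, w, hxy, hzw, ?_, ?_⟩
  · rw [eval_udeg1 ha1, hL, hM]; linear_combination he1
  · rw [eval_udeg1 ha1', hL', hM']; linear_combination he2

lemma common_zero {Q₁ Q₂ : MvPolynomial (Fin 4) k} {a b a' b' : ℕ}
    (ha : Q₁.IsWeightedHomogeneous ![1,1,0,0] a) (hb : Q₁.IsWeightedHomogeneous ![0,0,1,1] b)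
    (ha' : Q₂.IsWeightedHomogeneous ![1,1,0,0] a') (hb' : Q₂.IsWeightedHomogeneous ![0,0,1,1] b')
    (haa : a + a' = 2) (hbb : b + b' = 2) (h1 : 1 ≤ a + b) (h2 : 1 ≤ a' + b') :
    ∃ x y z w : k, ¬(x = 0 ∧ y = 0) ∧ ¬(z = 0 ∧ w = 0) ∧
      eval ![x,y,z,w] Q₁ = 0 ∧ eval ![x,y,z,w] Q₂ = 0 := by
  rcases (by omega : b' = 0 ∨ b = 0 ∨ a' = 0 ∨ a = 0 ∨ (a = 1 ∧ b = 1 ∧ a' = 1 ∧ b' = 1))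
    with h | h | h | h | ⟨e1, e2, e3, e4⟩
  · have hb2 : b = 2 := by omega
    subst hb2 h
    exact caseA hb ha' (by omega) hb'
  · have hb2 : b' = 2 := by omega
    subst hb2 h
    obtain ⟨x, y, z, w, hxy, hzw, u1, u2⟩ := caseA hb' ha (by omega) hb
    exact ⟨x, y, z, w, hxy, hzw, u2, u1⟩
  · have ha2 : a = 2 := by omega
    subst ha2 h
    exact caseA' ha hb' (by omega) ha'
  · have ha2 : a' = 2 := by omega
    subst ha2 h
    obtain ⟨x, y, z, w, hxy, hzw, u1, u2⟩ := caseA' ha' hb (by omega) ha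
    exact ⟨x, y, z, w, hxy, hzw, u2, u1⟩
  · subst e1 e2 e3 e4
    exact caseB ha hb ha' hb'

end Field

end SmoothAux

/-- **A smooth bidegree (2,2) curve in ℙ¹ × ℙ¹ is irreducible.**
If `P` is a nonzero polynomial in `k[u₀,u₁,v₀,v₁]`, bihomogeneous of bidegree `(2,2)`, and
there is no point `(u, v)` with `u ≠ 0`, `v ≠ 0` at which all four partial derivatives of `P`
vanish, then `P` is not a product of two nonconstant polynomials. -/
theorem smooth_bidegree_two_two_irreducible {k : Type*} [Field k] [IsAlgClosed k]
    (hchar : (2 : k) ≠ 0)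
    (P : MvPolynomial (Fin 4) k) (hP : P ≠ 0)
    (h₁ : IsWeightedHomogeneous ![1, 1, 0, 0] P 2)
    (h₂ : IsWeightedHomogeneous ![0, 0, 1, 1] P 2)
    (hsmooth : ¬ ∃ (u v : Fin 2 → k), u ≠ 0 ∧ v ≠ 0 ∧
      ∀ i : Fin 4, eval ![u 0, u 1, v 0, v 1] (pderiv i P) = 0) :
    ∀ P₁ P₂ : MvPolynomial (Fin 4) k, P = P₁ * P₂ →
      P₁.totalDegree = 0 ∨ P₂.totalDegree = 0 := by
  intro P₁ P₂ hfac
  by_contra hcon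
  push_neg at hcon
  obtain ⟨hd1, hd2⟩ := hcon
  have hne1 : P₁ ≠ 0 := by rintro rfl; exact hP (by rw [hfac, zero_mul])
  have hne2 : P₂ ≠ 0 := by rintro rfl; exact hP (by rw [hfac, mul_zero])
  rw [hfac] at h₁ h₂
  obtain ⟨a, a', haa, ha, ha'⟩ := SmoothAux.factor_isWeightedHomogeneous hne1 hne2 h₁
  obtain ⟨b, b', hbb, hb, hb'⟩ := SmoothAux.factor_isWeightedHomogeneous hne1 hne2 h₂
  have hconst : ∀ Q : MvPolynomial (Fin 4) k, Q.IsWeightedHomogeneous ![1,1,0,0] 0 →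
      Q.IsWeightedHomogeneous ![0,0,1,1] 0 → Q.totalDegree = 0 := by
    intro Q hu hv
    rw [totalDegree_eq_zero_iff]
    intro m hm i
    have hw1 := hu (mem_support_iff.mp hm)
    have hw2 := hv (mem_support_iff.mp hm)
    rw [SmoothAux.weight_u] at hw1
    rw [SmoothAux.weight_v] at hw2
    fin_cases i
    · show m 0 = 0; omega
    · show m 1 = 0; omega
    · show m 2 = 0; omega
    · show m 3 = 0; omega
  have h1ab : 1 ≤ a + b := by
    by_contra hcc
    have ea : a = 0 := by omega
    have eb : b = 0 := by omega
    rw [ea] at ha; rw [eb] at hb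
    exact hd1 (hconst P₁ ha hb)
  have h2ab : 1 ≤ a' + b' := by
    by_contra hcc
    have ea : a' = 0 := by omega
    have eb : b' = 0 := by omega
    rw [ea] at ha'; rw [eb] at hb'
    exact hd2 (hconst P₂ ha' hb')
  obtain ⟨x, y, z, w, hxy, hzw, hz1, hz2⟩ :=
    SmoothAux.common_zero ha hb ha' hb' haa hbb h1ab h2ab
  apply hsmooth
  refine ⟨![x, y], ![z, w], ?_, ?_, ?_⟩
  · intro h
    exact hxy ⟨by simpa using congrFun h 0, by simpa using congrFun h 1⟩
  · intro h
    exact hzw ⟨by simpa using congrFun h 0, by simpa using congrFun h 1⟩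
  · intro i
    have hp : ![(![x, y] : Fin 2 → k) 0, (![x, y] : Fin 2 → k) 1,
        (![z, w] : Fin 2 → k) 0, (![z, w] : Fin 2 → k) 1] = ![x, y, z, w] := rfl
    rw [hp, hfac, pderiv_mul]
    rw [map_add, map_mul, map_mul, hz1, hz2]
    ring
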